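/- Let L be a linear (modular, normalized) set function and F a normalized non-decreasing submodular function on P([n]), and let M=([n],I) be a matroid with bases B. Suppose S = {s_1,…,s_k} ∈ B is built greedily: at step i, s_i maximizes (L+F)(S_{i−1}∪{x}) over x ∉ S_{i−1} with S_{i−1}∪{x} ∈ I. Then for every O ∈ B, L(S) + 2F(S) ≥ L(O) + F(O). -/

import Mathlib

def Submodular {n : ℕ} (F : Finset (Fin n) → ℝ) : Prop :=
  ∀ A B : Finset (Fin n), F (A ∪ B) + F (A ∩ B) ≤ F A + F B

structure FinMatroid (n : ℕ) where
  Indep : Finset (Fin n) → Prop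
  empty_indep : Indep ∅
  indep_subset : ∀ ⦃A B : Finset (Fin n)⦄, Indep A → B ⊆ A → Indep B
  exchange : ∀ ⦃A B : Finset (Fin n)⦄, Indep A → Indep B → B.card < A.card →
    ∃ x ∈ A \ B, Indep (insert x B)

def FinMatroid.IsBasis {n : ℕ} (M : FinMatroid n) (A : Finset (Fin n)) : Prop :=
  M.Indep A ∧ ∀ B : Finset (Fin n), M.Indep B → A ⊆ B → A = B

/-- Submodularity gives decreasing marginals. -/
private lemma marginal_le {n : ℕ} {F : Finset (Fin n) → ℝ} (hF : Submodular F)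
    (hFmono : ∀ A B : Finset (Fin n), A ⊆ B → F A ≤ F B)
    {A B : Finset (Fin n)} (hAB : A ⊆ B) (x : Fin n) :
    F (insert x B) - F B ≤ F (insert x A) - F A := by
  have h := hF (insert x A) B
  have h1 : insert x A ∪ B = insert x B := by
    rw [Finset.insert_union, Finset.union_eq_right.mpr hAB]
  have h2 : F A ≤ F (insert x A ∩ B) :=
    hFmono _ _ (Finset.subset_inter (Finset.subset_insert _ _) hAB)
  rw [h1] at h
  linarith

/-- An independent set can be extended to the size of another independent set
using only elements of the latter. -/
private lemma exists_ext {n : ℕ} (M : FinMatroid n) :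
    ∀ d (A B : Finset (Fin n)), M.Indep A → M.Indep B → A.card + d = B.card →
      ∃ T, M.Indep T ∧ A ⊆ T ∧ T ⊆ A ∪ B ∧ T.card = B.card := by
  intro d
  induction d with
  | zero =>
    intro A B hA _ h
    exact ⟨A, hA, Finset.Subset.refl _, Finset.subset_union_left, by omega⟩
  | succ d ih =>
    intro A B hA hB h
    obtain ⟨x, hx, hxi⟩ := M.exchange hB hA (by omega)
    rw [Finset.mem_sdiff] at hx
    obtain ⟨T, hT, hAT, hTU, hc⟩ := ih (insert x A) B hxi hB
      (by rw [Finset.card_insert_of_notMem hx.2]; omega)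
    refine ⟨T, hT, (Finset.subset_insert x A).trans hAT, hTU.trans ?_, hc⟩
    exact Finset.union_subset
      (Finset.insert_subset (Finset.mem_union_right _ hx.1) Finset.subset_union_left)
      Finset.subset_union_right

private lemma basis_card_eq {n : ℕ} (M : FinMatroid n) {A B : Finset (Fin n)}
    (hA : M.IsBasis A) (hB : M.IsBasis B) : A.card = B.card := by
  by_contra h
  rcases Nat.lt_or_ge A.card B.card with hlt | hge
  · obtain ⟨x, hx, hxi⟩ := M.exchange hB.1 hA.1 hlt
    rw [Finset.mem_sdiff] at hx
    have := hA.2 _ hxi (Finset.subset_insert x A)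
    exact hx.2 (this ▸ Finset.mem_insert_self x A)
  · have hlt : B.card < A.card := by omega
    obtain ⟨x, hx, hxi⟩ := M.exchange hA.1 hB.1 hlt
    rw [Finset.mem_sdiff] at hx
    have := hB.2 _ hxi (Finset.subset_insert x B)
    exact hx.2 (this ▸ Finset.mem_insert_self x B)

/-- Theorem 4 of the paper: if `S` is produced by the greedy algorithm for
`L + F` on the bases of a matroid, with `L` linear and `F` normalized,
non-decreasing, submodular, then `L(S) + 2F(S) ≥ L(O) + F(O)` for any basis `O`. -/
theorem greedy_guarantee {n k : ℕ} (M : FinMatroid n)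
    (ℓ : Fin n → ℝ) (F : Finset (Fin n) → ℝ)
    (hF : Submodular F) (hFmono : ∀ A B : Finset (Fin n), A ⊆ B → F A ≤ F B)
    (hFnorm : F ∅ = 0)
    (L : Finset (Fin n) → ℝ) (hL : ∀ A : Finset (Fin n), L A = ∑ i ∈ A, ℓ i)
    (s : ℕ → Fin n)
    (hstep : ∀ i < k, s i ∉ (Finset.range i).image s ∧
      M.Indep (insert (s i) ((Finset.range i).image s)))
    (hgreedy : ∀ i < k, ∀ x : Fin n, x ∉ (Finset.range i).image s →
      M.Indep (insert x ((Finset.range i).image s)) →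
      L (insert x ((Finset.range i).image s)) +
        F (insert x ((Finset.range i).image s)) ≤
      L (insert (s i) ((Finset.range i).image s)) +
        F (insert (s i) ((Finset.range i).image s)))
    (hbasis : M.IsBasis ((Finset.range k).image s)) :
    ∀ O : Finset (Fin n), M.IsBasis O →
      L O + F O ≤ L ((Finset.range k).image s) + 2 * F ((Finset.range k).image s) := by
  classical
  intro O hO
  set Sfin : ℕ → Finset (Fin n) := fun i => (Finset.range i).image s with hSfin
  -- cardinalities and independence of prefixes
  have hcard : ∀ i ≤ k, (Sfin i).card = i := by
    intro i hi
    induction i with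
    | zero => simp [hSfin]
    | succ j ih =>
      simp only [hSfin, Finset.range_add_one, Finset.image_insert]
      rw [Finset.card_insert_of_notMem (hstep j (by omega)).1, ih (by omega)]
  have hSsucc : ∀ i, Sfin (i + 1) = insert (s i) (Sfin i) := by
    intro i
    simp only [hSfin, Finset.range_add_one, Finset.image_insert]
  have hSmono : ∀ i j, i ≤ j → Sfin i ⊆ Sfin j := fun i j hij =>
    Finset.image_subset_image (Finset.range_subset_range.2 hij)
  have hindep : ∀ i ≤ k, M.Indep (Sfin i) := by
    intro i hi
    induction i with
    | zero => simpa [hSfin] using M.empty_indep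
    | succ j ih =>
      rw [hSsucc]
      exact (hstep j (by omega)).2
  have hOcard : O.card = k := by
    have := basis_card_eq M hO hbasis
    rw [this]; exact hcard k le_rfl
  -- the candidate sets for the exchange bijection
  set t : Fin k → Finset (Fin n) := fun i =>
    (O \ Sfin i.val).filter (fun o => M.Indep (insert o (Sfin i.val))) with ht
  have htsub : ∀ i, t i ⊆ O := fun i => (Finset.filter_subset _ _).trans Finset.sdiff_subset
  have htcard : ∀ i : Fin k, k - i.val ≤ (t i).card := by
    intro i
    obtain ⟨T, hT, hAT, hTU, hc⟩ := exists_ext M (k - i.val) (Sfin i.val) O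
      (hindep i.val (le_of_lt i.isLt)) hO.1
      (by rw [hcard i.val (le_of_lt i.isLt), hOcard]; omega)
    have hsub : T \ Sfin i.val ⊆ t i := by
      intro e he
      rw [Finset.mem_sdiff] at he
      rw [ht, Finset.mem_filter, Finset.mem_sdiff]
      refine ⟨⟨?_, he.2⟩, M.indep_subset hT (Finset.insert_subset he.1 hAT)⟩
      rcases Finset.mem_union.1 (hTU he.1) with h | h
      · exact absurd h he.2
      · exact h
    calc k - i.val = T.card - (Sfin i.val).card := by
          rw [hc, hOcard, hcard i.val (le_of_lt i.isLt)]
      _ = (T \ Sfin i.val).card := (Finset.card_sdiff_of_subset hAT).symm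
      _ ≤ (t i).card := Finset.card_le_card hsub
  have htnested : ∀ i j : Fin k, i ≤ j → t j ⊆ t i := by
    intro i j hij e he
    rw [ht, Finset.mem_filter, Finset.mem_sdiff] at he ⊢
    have hsub : Sfin i.val ⊆ Sfin j.val := hSmono _ _ hij
    exact ⟨⟨he.1.1, fun h => he.1.2 (hsub h)⟩,
      M.indep_subset he.2 (Finset.insert_subset_insert _ hsub)⟩
  -- Hall's condition
  have hall : ∀ J : Finset (Fin k), J.card ≤ (J.biUnion t).card := by
    intro J
    rcases J.eq_empty_or_nonempty with rfl | hne
    · simp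
    · set i0 := J.min' hne with hi0
      have h1 : t i0 ⊆ J.biUnion t := Finset.subset_biUnion_of_mem t (J.min'_mem hne)
      have h2 : J.card ≤ k - i0.val := by
        have himg : J.image Fin.val ⊆ Finset.Ico i0.val k := by
          intro m hm
          rw [Finset.mem_image] at hm
          obtain ⟨j, hj, rfl⟩ := hm
          exact Finset.mem_Ico.2 ⟨J.min'_le j hj, j.isLt⟩
        calc J.card = (J.image Fin.val).card :=
              (Finset.card_image_of_injective J Fin.val_injective).symm
          _ ≤ (Finset.Ico i0.val k).card := Finset.card_le_card himg
          _ = k - i0.val := Nat.card_Ico _ _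
      exact h2.trans ((htcard i0).trans (Finset.card_le_card h1))
  obtain ⟨f, hfinj, hft⟩ := (Finset.all_card_le_biUnion_card_iff_exists_injective t).1 hall
  -- the image of f is exactly O
  have hfO : Finset.univ.image f = O := by
    apply Finset.eq_of_subset_of_card_le
    · intro x hx
      rw [Finset.mem_image] at hx
      obtain ⟨i, _, rfl⟩ := hx
      exact htsub i (hft i)
    · rw [Finset.card_image_of_injective _ hfinj, Finset.card_univ, Fintype.card_fin, hOcard]
  set g : ℕ → Fin n := fun i => if h : i < k then f ⟨i, h⟩ else s 0 with hg
  set Ofin : ℕ → Finset (Fin n) := fun i => Sfin k ∪ (Finset.range i).image g with hOfin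
  have hgO : (Finset.range k).image g = O := by
    rw [← hfO]
    ext x
    simp only [Finset.mem_image, Finset.mem_range, Finset.mem_univ, true_and, hg]
    constructor
    · rintro ⟨i, hi, rfl⟩; exact ⟨⟨i, hi⟩, by simp [hi]⟩
    · rintro ⟨i, rfl⟩; exact ⟨i.val, i.isLt, by simp [i.isLt]⟩
  have hOsucc : ∀ i, Ofin (i + 1) = insert (g i) (Ofin i) := by
    intro i
    simp only [hOfin, Finset.range_add_one, Finset.image_insert, Finset.union_insert]
  -- key per-step inequality
  have hkey : ∀ i ∈ Finset.range k,
      ℓ (g i) + (F (Ofin (i + 1)) - F (Ofin i)) ≤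
      ℓ (s i) + (F (Sfin (i + 1)) - F (Sfin i)) := by
    intro i hi
    rw [Finset.mem_range] at hi
    have hgi : g i = f ⟨i, hi⟩ := by simp [hg, hi]
    have hmem := hft ⟨i, hi⟩
    rw [ht, Finset.mem_filter, Finset.mem_sdiff] at hmem
    have hnot : g i ∉ Sfin i := by rw [hgi]; exact hmem.1.2
    have hind : M.Indep (insert (g i) (Sfin i)) := by rw [hgi]; exact hmem.2
    have hgr := hgreedy i hi (g i) hnot hind
    rw [hSsucc] at *
    have hLg : L (insert (g i) (Sfin i)) = L (Sfin i) + ℓ (g i) := by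
      rw [hL, hL, Finset.sum_insert hnot]; ring
    have hLs : L (insert (s i) (Sfin i)) = L (Sfin i) + ℓ (s i) := by
      rw [hL, hL, Finset.sum_insert (hstep i hi).1]; ring
    have hmarg : F (insert (g i) (Ofin i)) - F (Ofin i) ≤
        F (insert (g i) (Sfin i)) - F (Sfin i) :=
      marginal_le hF hFmono ((hSmono i k (le_of_lt hi)).trans Finset.subset_union_left) (g i)
    rw [hOsucc]
    linarith
  have hsum := Finset.sum_le_sum hkey
  rw [Finset.sum_add_distrib, Finset.sum_add_distrib, Finset.sum_range_sub (fun i => F (Ofin i)),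
    Finset.sum_range_sub (fun i => F (Sfin i))] at hsum
  have hO0 : Ofin 0 = Sfin k := by simp [hOfin]
  have hOk : Ofin k = Sfin k ∪ O := by rw [hOfin]; simp only [hgO]
  have hS0 : Sfin 0 = ∅ := by simp [hSfin]
  have hLO : ∑ i ∈ Finset.range k, ℓ (g i) = L O := by
    rw [hL, ← hgO]
    rw [Finset.sum_image]
    intro x hx y hy hxy
    rw [Finset.mem_coe, Finset.mem_range] at hx hy
    have : f ⟨x, hx⟩ = f ⟨y, hy⟩ := by
      simpa [hg, hx, hy] using hxy
    exact congrArg Fin.val (hfinj this)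
  have hLS : ∑ i ∈ Finset.range k, ℓ (s i) = L (Sfin k) := by
    rw [hL]
    rw [Finset.sum_image]
    intro x hx y hy hxy
    rw [Finset.mem_coe, Finset.mem_range] at hx hy
    by_contra hne
    rcases Nat.lt_or_ge x y with hlt | hge
    · exact (hstep y hy).1 (Finset.mem_image.2 ⟨x, Finset.mem_range.2 hlt, hxy⟩)
    · have hlt : y < x := by omega
      exact (hstep x hx).1 (Finset.mem_image.2 ⟨y, Finset.mem_range.2 hlt, hxy.symm⟩)
  rw [hO0, hOk, hS0, hFnorm, hLO, hLS] at hsum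
  have hmono2 : F O ≤ F (Sfin k ∪ O) := hFmono _ _ Finset.subset_union_right
  show L O + F O ≤ L (Sfin k) + 2 * F (Sfin k)
  linarith
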